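/- Let T be a triangulated category with thick subcategory T^p, and let 𝒳, 𝒴 be subcategories such that T = 𝒳 ⊥ 𝒳^⊥ and T = ^⊥𝒴 ⊥ 𝒴 are co-t-structures and 𝒳 ⊥ 𝒴 is a co-t-structure on T^p. Set 𝒵 = 𝒳^⊥ ∩ ^⊥(Σ𝒴). Then for every object X of T there exists Z ∈ 𝒵 with X ≅ Z in the Verdier quotient T/T^p. -/

import Mathlib

open CategoryTheory Category Limits Pretriangulated

universe v u v' u'

variable {T : Type u} [Category.{v} T] [HasZeroObject T] [HasShift T ℤ]
  [Preadditive T] [∀ n : ℤ, (shiftFunctor T n).Additive] [Pretriangulated T]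

/-- Ported: `Triangulated.Subcategory` as it stood in Mathlib (Dec 2024), removed since. -/
structure CategoryTheory.Triangulated.Subcategory (C : Type*) [Category C] [HasZeroObject C]
    [HasShift C ℤ] [Preadditive C] [∀ n : ℤ, (shiftFunctor C n).Additive]
    [Pretriangulated C] where
  P : C → Prop
  zero' : ∃ (Z : C) (_ : IsZero Z), P Z
  shift (X : C) (n : ℤ) : P X → P (X⟦n⟧)
  ext₂' (T : Triangle C) (_ : T ∈ distTriang C) : P T.obj₁ → P T.obj₃ →
    (∃ (Y : C) (_ : P Y), Nonempty (T.obj₂ ≅ Y))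

/-- Ported: `Triangulated.Subcategory.W` as it stood in Mathlib (Dec 2024). -/
def CategoryTheory.Triangulated.Subcategory.W {C : Type*} [Category C] [HasZeroObject C]
    [HasShift C ℤ] [Preadditive C] [∀ n : ℤ, (shiftFunctor C n).Additive]
    [Pretriangulated C] (S : Triangulated.Subcategory C) : MorphismProperty C :=
  fun X Y f => ∃ (Z : C) (g : Y ⟶ Z) (h : Z ⟶ X⟦(1 : ℤ)⟧)
    (_ : Triangle.mk f g h ∈ distTriang C), S.P Z

/-- The right orthogonal of a class of objects. -/
def rperp (𝒜 : Set T) : Set T := {B | ∀ A ∈ 𝒜, ∀ f : A ⟶ B, f = 0}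

/-- The left orthogonal of a class of objects. -/
def lperp (ℬ : Set T) : Set T := {A | ∀ B ∈ ℬ, ∀ f : A ⟶ B, f = 0}

/-- A co-t-structure `𝒜 ⊥ ℬ` on the class of objects `Pc`:  `Hom(𝒜, ℬ) = 0`,
`Σ⁻¹𝒜 ⊆ 𝒜`, `Σℬ ⊆ ℬ`, and every object of `Pc` sits in a distinguished triangle
`A → X → B → ΣA` with `A ∈ 𝒜`, `B ∈ ℬ`. -/
structure IsCotStructureOn (Pc 𝒜 ℬ : Set T) : Prop where
  orth : ∀ A ∈ 𝒜, ∀ B ∈ ℬ, ∀ f : A ⟶ B, f = 0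
  shiftA : ∀ A ∈ 𝒜, A⟦(-1 : ℤ)⟧ ∈ 𝒜
  shiftB : ∀ B ∈ ℬ, B⟦(1 : ℤ)⟧ ∈ ℬ
  tri : ∀ X ∈ Pc, ∃ (A B : T) (_ : A ∈ 𝒜) (_ : B ∈ ℬ)
    (f : A ⟶ X) (g : X ⟶ B) (h : B ⟶ A⟦(1 : ℤ)⟧),
    Triangle.mk f g h ∈ distTriang T

/-- Iyama–Yang reduction: let `T` be triangulated with thick subcategory `T^p`, and
`𝒳, 𝒴 ⊆ T^p` with co-t-structures `T = 𝒳 ⊥ 𝒳^⊥`, `T = ^⊥𝒴 ⊥ 𝒴`, and `T^p = 𝒳 ⊥ 𝒴`.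
Set `𝒵 = 𝒳^⊥ ∩ ^⊥(Σ𝒴)`.  Then every object of `T` is isomorphic, in the Verdier
quotient `T/T^p`, to an object of `𝒵`. -/
theorem stmt13 (P : Triangulated.Subcategory T)
    (hthick : ∀ X Y : T, (∃ (r : X ⟶ Y) (s : Y ⟶ X), s ≫ r = 𝟙 Y) → P.P X → P.P Y)
    {D : Type u'} [Category.{v'} D] (Q : T ⥤ D) [Q.IsLocalization P.W]
    (𝒳 𝒴 : Set T) (hX : 𝒳 ⊆ P.P) (hY : 𝒴 ⊆ P.P)
    (h1 : IsCotStructureOn Set.univ 𝒳 (rperp 𝒳))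
    (h2 : IsCotStructureOn Set.univ (lperp 𝒴) 𝒴)
    (h3 : IsCotStructureOn P.P 𝒳 𝒴) :
    ∀ X : T, ∃ Z ∈ rperp 𝒳 ∩ lperp ((fun B : T => B⟦(1 : ℤ)⟧) '' 𝒴),
      Nonempty (Q.obj X ≅ Q.obj Z) := by
  intro X
  -- Step 1: triangle A → X → B → ΣA with A ∈ 𝒳, B ∈ 𝒳^⊥.
  obtain ⟨A, B, hA, hB, f, g, h, hT1⟩ := h1.tri X (Set.mem_univ X)
  have hWg : P.W g := ⟨_, h, -(shiftFunctor T (1 : ℤ)).map f, rot_of_distTriang _ hT1, P.shift A 1 (hX hA)⟩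
  have hg : IsIso (Q.map g) := Localization.inverts Q P.W g hWg
  -- Step 2: triangle L → B⟦-1⟧ → Y' → ΣL with L ∈ ^⊥𝒴, Y' ∈ 𝒴; shift by 1.
  obtain ⟨L, Y', hL, hY', f2, g2, h2', hT2⟩ := h2.tri (B⟦(-1 : ℤ)⟧) (Set.mem_univ _)
  have hT2s := Pretriangulated.Triangle.shift_distinguished _ hT2 1
  set T2 : Triangle T := (Triangle.shiftFunctor T 1).obj (Triangle.mk f2 g2 h2') with hT2def
  -- the canonical iso `B⟦-1⟧⟦1⟧ ≅ B`
  have e : (B⟦(-1 : ℤ)⟧)⟦(1 : ℤ)⟧ ≅ B :=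
    (shiftFunctorCompIsoId T (-1) 1 (by ring)).app B
  have eY : (Y'⟦(1 : ℤ)⟧)⟦(-1 : ℤ)⟧ ≅ Y' :=
    (shiftFunctorCompIsoId T 1 (-1) (by ring)).app Y'
  refine ⟨L⟦(1 : ℤ)⟧, ⟨?_, ?_⟩, ?_⟩
  · -- L⟦1⟧ ∈ rperp 𝒳
    intro x hx φ
    -- any map from x to B⟦-1⟧⟦1⟧ is zero
    have hB' : ∀ ψ : x ⟶ (B⟦(-1 : ℤ)⟧)⟦(1 : ℤ)⟧, ψ = 0 := by
      intro ψ
      have : ψ ≫ e.hom = 0 := hB x hx _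
      simpa using congrArg (fun a => a ≫ e.inv) this
    -- φ ≫ T2.mor₁ = 0, so φ factors through (Y'⟦1⟧)⟦-1⟧
    have hfac := Pretriangulated.Triangle.coyoneda_exact₂ _
      (inv_rot_of_distTriang _ hT2s) φ (hB' _)
    obtain ⟨ψ, hψ⟩ := hfac
    have hψ0 : ψ = 0 := by
      have : ψ ≫ eY.hom = 0 := h3.orth x hx Y' hY' _
      exact (cancel_mono eY.hom).1 (this.trans zero_comp.symm)
    rw [hψ, hψ0, zero_comp]
    rfl
  · -- L⟦1⟧ ∈ lperp (Σ𝒴)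
    rintro W ⟨y, hy, rfl⟩ φ
    obtain ⟨ψ, rfl⟩ := (shiftFunctor T (1 : ℤ)).map_surjective φ
    rw [hL y hy ψ, Functor.map_zero]
  · -- Q.obj X ≅ Q.obj (L⟦1⟧)
    have hWm : P.W T2.mor₁ :=
      ⟨_, T2.mor₂, T2.mor₃, hT2s, P.shift Y' 1 (hY hY')⟩
    have hm : IsIso (Q.map T2.mor₁) := Localization.inverts Q P.W _ hWm
    exact ⟨asIso (Q.map g) ≪≫ (Q.mapIso e).symm ≪≫ (asIso (Q.map T2.mor₁)).symm⟩
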